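/- Let $E$, $F$ be Banach spaces, $H$ a Hilbert space, and $T : E \to H$, $S : F \to H$ bounded linear operators such that the image of $S$ is closed and the orthogonal projection of the image of $T$ onto the orthogonal complement of the image of $S$ is closed in that orthogonal complement. Then the sum operator $T \oplus S : E \times F \to H$, $(x,y) \mapsto T(x) + S(y)$, is surjective if and only if $(\operatorname{Im} T)^{\perp} \cap (\operatorname{Im} S)^{\perp} = \{0\}$. -/

import Mathlib

set_option synthInstance.maxHeartbeats 400000
theorem stmt_5 {E F H : Type*}
    [NormedAddCommGroup E] [NormedSpace ℝ E] [CompleteSpace E]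
    [NormedAddCommGroup F] [NormedSpace ℝ F] [CompleteSpace F]
    [NormedAddCommGroup H] [InnerProductSpace ℝ H] [CompleteSpace H]
    (T : E →L[ℝ] H) (S : F →L[ℝ] H)
    (hS : IsClosed (Set.range S))
    (hproj : IsClosed ((fun x => Submodule.orthogonalProjectionOnto (LinearMap.range (S : F →ₗ[ℝ] H))ᗮ x) ''
      (Set.range T))) :
    Function.Surjective (fun p : E × F => T p.1 + S p.2) ↔
      (LinearMap.range (T : E →ₗ[ℝ] H))ᗮ ⊓ (LinearMap.range (S : F →ₗ[ℝ] H))ᗮ = ⊥ := by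
  set W := LinearMap.range (S : F →ₗ[ℝ] H) with hW
  have hWclosed : IsClosed (W : Set H) := by
    simpa [hW, LinearMap.coe_range] using hS
  haveI : CompleteSpace W := hWclosed.completeSpace_coe
  set K := LinearMap.range (T : E →ₗ[ℝ] H) ⊔ W with hK
  have hrange : Set.range (fun p : E × F => T p.1 + S p.2) = (K : Set H) := by
    ext x
    simp only [Set.mem_range, SetLike.mem_coe, hK, Submodule.mem_sup]
    constructor
    · rintro ⟨⟨a, b⟩, rfl⟩
      exact ⟨T a, ⟨a, rfl⟩, S b, ⟨b, rfl⟩, rfl⟩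
    · rintro ⟨y, ⟨a, rfl⟩, z, ⟨b, rfl⟩, rfl⟩
      exact ⟨(a, b), rfl⟩
  have hKset : (K : Set H) =
      (fun x => Submodule.orthogonalProjectionOnto Wᗮ x) ⁻¹'
        ((fun x => Submodule.orthogonalProjectionOnto Wᗮ x) '' (Set.range T)) := by
    ext x
    constructor
    · intro hx
      rcases Submodule.mem_sup.mp hx with ⟨y, hy, z, hz, rfl⟩
      rcases hy with ⟨a, rfl⟩
      refine ⟨T a, ⟨a, rfl⟩, ?_⟩
      have hz0 : Submodule.orthogonalProjectionOnto Wᗮ z = 0 :=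
        Submodule.orthogonalProjectionOnto_eq_zero_iff.mpr (W.le_orthogonal_orthogonal hz)
      simp [map_add, hz0]
    · rintro ⟨t, ⟨a, rfl⟩, ht⟩
      have hx0 : x - T a ∈ W := by
        have h0 : Submodule.orthogonalProjectionOnto Wᗮ (x - T a) = 0 := by
          simp [map_sub, ht]
        rw [← Submodule.orthogonal_orthogonal W]
        exact Submodule.orthogonalProjectionOnto_eq_zero_iff.mp h0
      exact Submodule.mem_sup.mpr ⟨T a, ⟨a, rfl⟩, x - T a, hx0, by abel⟩
  have hKclosed : IsClosed (K : Set H) := by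
    rw [hKset]
    exact hproj.preimage (Submodule.orthogonalProjectionOnto Wᗮ).continuous
  haveI : CompleteSpace K := hKclosed.completeSpace_coe
  rw [Submodule.inf_orthogonal, ← hK, Submodule.orthogonal_eq_bot_iff]
  constructor
  · intro hsurj
    have huniv : (K : Set H) = Set.univ := by
      rw [← hrange, Set.range_eq_univ]
      exact hsurj
    exact Submodule.eq_top_iff'.mpr fun x => by
      have : x ∈ (K : Set H) := huniv ▸ Set.mem_univ x
      exact this
  · intro hKtop
    intro x
    have hx : x ∈ (K : Set H) := hKtop ▸ Submodule.mem_top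
    have := hrange ▸ hx
    rcases this with ⟨p, hp⟩
    exact ⟨p, hp⟩
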